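/- For any real numbers z_1,...,z_n and 1 ≤ k ≤ n, the sum of the k largest values among |z_1|,...,|z_n| equals ∫_0^∞ min{k, #{i : |z_i| ≥ s}} ds; that is, max_{|I|=k} Σ_{i∈I} |z_i| = ∫_0^∞ min{k, Σ_{i=1}^n 1_{{|z_i| ≥ s}}} ds. -/

import Mathlib

open MeasureTheory Finset Pointwise

noncomputable def maxKSum {n : ℕ} (k : ℕ) (x : Fin n → ℝ) : ℝ :=
  sSup {y | ∃ I : Finset (Fin n), I.card = k ∧ y = ∑ i ∈ I, |x i|}

noncomputable def kthMax {n : ℕ} (k : ℕ) (x : Fin n → ℝ) : ℝ :=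
  sSup {t : ℝ | k ≤ (Finset.univ.filter (fun i => t ≤ |x i|)).card}

noncomputable def tk {Ω : Type*} [MeasurableSpace Ω] (μ : Measure Ω) {n : ℕ}
    (X : Fin n → Ω → ℝ) (k : ℝ) : ℝ :=
  sInf {t : ℝ | 0 < t ∧ ∑ i, ∫ ω in {ω | t ≤ |X i ω|}, |X i ω| ∂μ ≤ k * t}

noncomputable def tstar {Ω : Type*} [MeasurableSpace Ω] (μ : Measure Ω) {n : ℕ}
    (X : Fin n → Ω → ℝ) (p : ℝ) : ℝ :=
  sInf {t : ℝ | 0 < t ∧ ∑ i, (μ {ω | t ≤ |X i ω|}).toReal ≤ p}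

def IsLogConcave {E : Type*} [AddCommGroup E] [Module ℝ E] [TopologicalSpace E]
    [MeasurableSpace E] (ν : Measure E) : Prop :=
  ∀ (K L : Set E) (l : ℝ), IsCompact K → IsCompact L → K.Nonempty → L.Nonempty →
    l ∈ Set.Icc (0 : ℝ) 1 → ν K ^ l * ν L ^ (1 - l) ≤ ν (l • K + (1 - l) • L)

noncomputable def med {Ω : Type*} [MeasurableSpace Ω] (μ : Measure Ω) (f : Ω → ℝ) : ℝ :=
  sInf {t : ℝ | (1 : ℝ) / 2 ≤ (μ {ω | f ω ≤ t}).toReal}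

noncomputable def kthMaxOn {n : ℕ} (J : Finset (Fin n)) (k : ℕ) (x : Fin n → ℝ) : ℝ :=
  sSup {t : ℝ | k ≤ (J.filter (fun i => t ≤ |x i|)).card}

theorem stmt_1 {n : ℕ} (z : Fin n → ℝ) (k : ℕ) (hk1 : 1 ≤ k) (hkn : k ≤ n) :
    maxKSum k z =
      ∫ s in Set.Ioi (0 : ℝ),
        min (k : ℝ) ((Finset.univ.filter (fun i => s ≤ |z i|)).card : ℝ) := by
  classical
  obtain ⟨I, hImem, hImax⟩ := Finset.exists_max_image
    ((Finset.univ : Finset (Fin n)).powersetCard k) (fun J => ∑ i ∈ J, |z i|)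
    (Finset.powersetCard_nonempty.2 (by simpa using hkn))
  have hIcard : I.card = k := (Finset.mem_powersetCard.1 hImem).2
  have hmax' : ∀ J : Finset (Fin n), J.card = k → ∑ i ∈ J, |z i| ≤ ∑ i ∈ I, |z i| := by
    intro J hJ
    exact hImax J (Finset.mem_powersetCard.2 ⟨Finset.subset_univ _, hJ⟩)
  have hdom : ∀ i ∈ I, ∀ j, j ∉ I → |z j| ≤ |z i| := by
    intro i hi j hj
    by_contra h
    push_neg at h
    have hjE : j ∉ I.erase i := fun hmem => hj (Finset.mem_of_mem_erase hmem)
    have hJcard : (insert j (I.erase i)).card = k := by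
      rw [Finset.card_insert_of_notMem hjE, Finset.card_erase_of_mem hi, hIcard]
      omega
    have hle := hmax' _ hJcard
    rw [Finset.sum_insert hjE, Finset.sum_erase_eq_sub hi] at hle
    linarith
  have hS : maxKSum k z = ∑ i ∈ I, |z i| := by
    have hbdd : ∀ y ∈ {y | ∃ J : Finset (Fin n), J.card = k ∧ y = ∑ i ∈ J, |z i|},
        y ≤ ∑ i ∈ I, |z i| := by
      rintro y ⟨J, hJ, rfl⟩
      exact hmax' J hJ
    refine le_antisymm (csSup_le ⟨_, I, hIcard, rfl⟩ hbdd)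
      (le_csSup ⟨∑ i ∈ I, |z i|, hbdd⟩ ⟨I, hIcard, rfl⟩)
  have hpt : ∀ s : ℝ, min (k : ℝ) ((Finset.univ.filter (fun i => s ≤ |z i|)).card : ℝ)
      = ∑ i ∈ I, if s ≤ |z i| then (1 : ℝ) else 0 := by
    intro s
    have hsum : (∑ i ∈ I, if s ≤ |z i| then (1 : ℝ) else 0)
        = ((I.filter (fun i => s ≤ |z i|)).card : ℝ) := by
      simp [Finset.sum_boole]
    rw [hsum, ← Nat.cast_min]
    congr 1
    by_cases hall : ∀ i ∈ I, s ≤ |z i|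
    · have h1 : I.filter (fun i => s ≤ |z i|) = I := Finset.filter_true_of_mem hall
      have h2 : k ≤ (Finset.univ.filter (fun i => s ≤ |z i|)).card := by
        rw [← hIcard]
        apply Finset.card_le_card
        intro i hi
        simp [hall i hi]
      rw [h1, hIcard, min_eq_left h2]
    · push_neg at hall
      obtain ⟨i0, hi0, hs⟩ := hall
      have heq : Finset.univ.filter (fun i => s ≤ |z i|) = I.filter (fun i => s ≤ |z i|) := by
        apply Finset.Subset.antisymm
        · intro j hj
          rw [Finset.mem_filter] at hj ⊢
          refine ⟨?_, hj.2⟩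
          by_contra hjI
          have h1 : |z j| ≤ |z i0| := hdom i0 hi0 j hjI
          linarith [hj.2]
        · intro j hj
          rw [Finset.mem_filter] at hj ⊢
          exact ⟨Finset.mem_univ _, hj.2⟩
      rw [heq, min_eq_right]
      calc (I.filter (fun i => s ≤ |z i|)).card ≤ I.card := Finset.card_filter_le _ _
        _ = k := hIcard
  have hindform : ∀ c : ℝ, (fun s => if s ≤ c then (1 : ℝ) else 0)
      = (Set.Iic c).indicator (fun _ => (1 : ℝ)) := by
    intro c
    ext s
    simp [Set.indicator_apply, Set.mem_Iic]
  have hintg : ∀ c : ℝ, MeasureTheory.IntegrableOn (fun s => if s ≤ c then (1 : ℝ) else 0)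
      (Set.Ioi (0 : ℝ)) := by
    intro c
    rw [hindform c]
    rw [MeasureTheory.IntegrableOn, MeasureTheory.integrable_indicator_iff measurableSet_Iic]
    refine (MeasureTheory.integrableOn_const_iff (by simp)).2 (Or.inr ?_)
    rw [MeasureTheory.Measure.restrict_apply measurableSet_Iic, Set.Iic_inter_Ioi]
    exact measure_Ioc_lt_top
  have hint : ∀ c : ℝ, 0 ≤ c →
      ∫ s in Set.Ioi (0 : ℝ), (if s ≤ c then (1 : ℝ) else 0) = c := by
    intro c hc
    rw [hindform c, MeasureTheory.setIntegral_indicator measurableSet_Iic]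
    rw [show Set.Ioi (0 : ℝ) ∩ Set.Iic c = Set.Ioc 0 c from Set.Ioi_inter_Iic]
    simp [Real.volume_Ioc, ENNReal.toReal_ofReal hc, hc]
  rw [hS]
  rw [MeasureTheory.setIntegral_congr_fun measurableSet_Ioi (fun s _ => hpt s)]
  rw [MeasureTheory.integral_finset_sum I (fun i _ => hintg |z i|)]
  exact (Finset.sum_congr rfl (fun i _ => hint |z i| (abs_nonneg _))).symm
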